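/- Let H be a Hermitian n×n complex matrix and let B, A be arbitrary n×n complex matrices. If [H, [B, H]] = 0 and [H, A] = 0, then [H, [B, A]] = 0. In other words, for a Hermitian H satisfying the Reshetikhin condition, the commutator with the boost B maps matrices commuting with H to matrices commuting with H. (The inductive step in the finite-dimensional proof of the paper's main theorem, combining Lemmas 2 and 3.) -/
import Mathlib

open Matrix

lemma trace_mul_conjTranspose_self_eq_zero {n : ℕ}
    (C : Matrix (Fin n) (Fin n) ℂ) (h : Matrix.trace (C * Cᴴ) = 0) : C = 0 := by
  have h' : (∑ i, ∑ j, Complex.normSq (C i j) : ℝ) = 0 := by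
    have : Matrix.trace (C * Cᴴ) = ∑ i, ∑ j, (Complex.normSq (C i j) : ℂ) := by
      simp [Matrix.trace, Matrix.mul_apply, Matrix.conjTranspose_apply,
        Matrix.diag, Complex.mul_conj]
    rw [this] at h
    exact_mod_cast h
  ext i j
  have hij : Complex.normSq (C i j) = 0 := by
    have := (Finset.sum_eq_zero_iff_of_nonneg (fun i _ =>
      Finset.sum_nonneg (fun j _ => Complex.normSq_nonneg (C i j)))).mp h' i (by simp)
    exact (Finset.sum_eq_zero_iff_of_nonneg (fun j _ =>
      Complex.normSq_nonneg (C i j))).mp this j (by simp)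
  simpa using Complex.normSq_eq_zero.mp hij

/-- inductive step of the finite-dimensional main theorem: For
a Hermitian matrix `H` and arbitrary matrices `B`, `A`, if `[H, [B, H]] = 0`
and `[H, A] = 0`, then `[H, [B, A]] = 0`. -/
theorem boost_preserves_conservation {n : ℕ} (hn : 1 ≤ n)
    (H B A : Matrix (Fin n) (Fin n) ℂ) (hH : H.IsHermitian)
    (hRes : H * (B * H - H * B) - (B * H - H * B) * H = 0)
    (hA : H * A - A * H = 0) :
    H * (B * A - A * B) - (B * A - A * B) * H = 0 := by
  set C := B * H - H * B with hC
  have hcomm : H * C = C * H := sub_eq_zero.mp hRes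
  have hAH : H * A = A * H := sub_eq_zero.mp hA
  have hCH : Cᴴ = H * Bᴴ - Bᴴ * H := by
    simp [hC, Matrix.conjTranspose_sub, Matrix.conjTranspose_mul, hH.eq]
  have h1 : Matrix.trace (C * (Bᴴ * H)) = Matrix.trace (C * (H * Bᴴ)) := by
    calc Matrix.trace (C * (Bᴴ * H)) = Matrix.trace ((C * Bᴴ) * H) := by
          rw [Matrix.mul_assoc]
      _ = Matrix.trace (H * (C * Bᴴ)) := Matrix.trace_mul_comm _ _
      _ = Matrix.trace (C * (H * Bᴴ)) := by
          rw [← Matrix.mul_assoc, hcomm, Matrix.mul_assoc]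
  have htr : Matrix.trace (C * Cᴴ) = 0 := by
    rw [hCH, Matrix.mul_sub, Matrix.trace_sub, h1, sub_self]
  have hBH : B * H = H * B := sub_eq_zero.mp (trace_mul_conjTranspose_self_eq_zero C htr)
  have e1 : H * (B * A) = B * A * H := by
    rw [← Matrix.mul_assoc, ← hBH, Matrix.mul_assoc, hAH, ← Matrix.mul_assoc]
  have e2 : H * (A * B) = A * B * H := by
    rw [← Matrix.mul_assoc, hAH, Matrix.mul_assoc, ← hBH, ← Matrix.mul_assoc]
  rw [Matrix.mul_sub, Matrix.sub_mul, e1, e2]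
  exact sub_self _
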